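/- Let n ≥ 2 and let P_n be the metric space on points {1,…,n} with d(i,j) = |i−j|. If T is an ultrametric space and f : T → P_n is a surjective non-contractive multi-embedding with path distortion at most α, then α ≥ (n·log₂ n)/(2(n−1)); in particular α ≥ (1/2)·log₂ n. -/

import Mathlib

/-- An ultrametric space: the distance satisfies the strong triangle inequality. -/
def IsUltrametricSpace (X : Type*) [MetricSpace X] : Prop :=
  ∀ x y z : X, dist x z ≤ max (dist x y) (dist y z)

/-- The metric space `P_n` on the points `{1,…,n}` (modelled by `Fin n`) with
`d(i,j) = |i - j|`, obtained by inducing the metric of `ℝ` along `i ↦ (i : ℝ)`. -/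
noncomputable instance pathMetricFin (n : ℕ) : MetricSpace (Fin n) :=
  MetricSpace.induced (fun i : Fin n => ((i : ℕ) : ℝ))
    (fun i j h => Fin.val_injective (Nat.cast_injective h)) inferInstance

/-- The length of a path (finite sequence of points) in a metric space. -/
noncomputable def pathLength {X : Type*} [MetricSpace X] (p : List X) : ℝ :=
  (List.zipWith dist p p.tail).sum

/-- A non-contractive multi-embedding `f : N → M` has path distortion at most `α`. -/
def PathDistortionLE {N M : Type*} [MetricSpace N] [MetricSpace M] (f : N → M) (α : ℝ) : Prop :=
  ∀ p : List M, ∃ p' : List N, p'.map f = p ∧ pathLength p' ≤ α * pathLength p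


section Aux

-- Lemma A: max edge in ultrametric path
lemma ultra_max_edge {T : Type*} [MetricSpace T] (hT : IsUltrametricSpace T)
    (u : ℕ → T) : ∀ k a : ℕ, ∃ i, a ≤ i ∧ i ≤ a + k ∧
      dist (u a) (u (a + k + 1)) ≤ dist (u i) (u (i + 1)) := by
  intro k
  induction k with
  | zero => exact fun a => ⟨a, le_refl _, by omega, by norm_num⟩
  | succ k ih =>
    intro a
    obtain ⟨i, h1, h2, h3⟩ := ih (a + 1)
    have hma := hT (u a) (u (a + 1)) (u (a + k + 2))
    rcases le_max_iff.mp hma with h | h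
    · exact ⟨a, le_refl _, by omega, by
        have : a + (k + 1) + 1 = a + k + 2 := by omega
        rw [this]; exact h⟩
    · refine ⟨i, by omega, by omega, ?_⟩
      have e1 : a + (k + 1) + 1 = a + 1 + k + 1 := by omega
      rw [e1]
      calc dist (u a) (u (a + 1 + k + 1)) ≤ dist (u (a+1)) (u (a + 1 + k + 1)) := by
            have : a + 1 + k + 1 = a + k + 2 := by omega
            rw [this]; exact h
        _ ≤ dist (u i) (u (i+1)) := h3

-- Analytic inequality
lemma analytic_ineq (p q : ℝ) (hp : 1 ≤ p) (hq : 1 ≤ q) :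
    (p + q) / 2 * Real.logb 2 (p + q) ≤
      (p + q - 1) + p / 2 * Real.logb 2 p + q / 2 * Real.logb 2 q := by
  have h2 : (0:ℝ) < Real.log 2 := Real.log_pos one_lt_two
  have hcv := Real.convexOn_mul_log.2 (Set.mem_Ici.mpr (by linarith : (0:ℝ) ≤ p))
      (Set.mem_Ici.mpr (by linarith : (0:ℝ) ≤ q))
      (by norm_num : (0:ℝ) ≤ (1/2:ℝ)) (by norm_num : (0:ℝ) ≤ (1/2:ℝ)) (by norm_num)
  simp only [smul_eq_mul] at hcv
  have hm : (0:ℝ) < p + q := by linarith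
  have hlm : Real.log ((1/2)*p + (1/2)*q) = Real.log (p+q) - Real.log 2 := by
    have : (1/2:ℝ)*p + (1/2)*q = (p+q)/2 := by ring
    rw [this, Real.log_div (by positivity) (by norm_num)]
  rw [hlm] at hcv
  have key : (p+q)/2 * Real.log (p+q) ≤
      (p+q-1) * Real.log 2 + p/2 * Real.log p + q/2 * Real.log q := by
    nlinarith [mul_nonneg (by linarith : (0:ℝ) ≤ (p+q)/2 - 1) h2.le]
  rw [Real.logb, Real.logb, Real.logb]
  have e1 : (p+q)/2 * (Real.log (p+q)/Real.log 2)
      = ((p+q)/2 * Real.log (p+q))/Real.log 2 := by ring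
  rw [e1]
  have e2 : (p + q - 1) + p / 2 * (Real.log p / Real.log 2) + q / 2 * (Real.log q / Real.log 2)
      = ((p+q-1) * Real.log 2 + p/2 * Real.log p + q/2 * Real.log q) / Real.log 2 := by
    field_simp
  rw [e2]
  gcongr


lemma key_rec {T : Type*} [MetricSpace T] (hT : IsUltrametricSpace T) :
    ∀ k a : ℕ, ∀ u : ℕ → T,
      (∀ i j : ℕ, a ≤ i → i ≤ a + k → a ≤ j → j ≤ a + k → |(i:ℝ) - (j:ℝ)| ≤ dist (u i) (u j)) →
      ((k:ℝ) + 1) / 2 * Real.logb 2 ((k:ℝ) + 1) ≤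
        ∑ i ∈ Finset.Ico a (a + k), dist (u i) (u (i + 1)) := by
  intro k
  induction k using Nat.strong_induction_on with
  | _ k ih =>
    intro a u hu
    match k, ih with
    | 0, _ => simp
    | (k' + 1), ih =>
      obtain ⟨i, hai, hik, hedge⟩ := ultra_max_edge hT u k' a
      have hbig : ((k':ℝ) + 1) ≤ dist (u i) (u (i + 1)) := by
        refine le_trans ?_ hedge
        have := hu a (a + k' + 1) (le_refl a) (by omega) (by omega) (by omega)
        refine le_trans ?_ this
        have : |((a:ℝ)) - ((a + k' + 1 : ℕ):ℝ)| = (k':ℝ) + 1 := by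
          push_cast; rw [abs_sub_comm]; rw [abs_of_nonneg (by linarith)]; ring
        rw [this]
      set s := i - a with hs
      set t := k' - s with ht
      have hst : s + t = k' := by omega
      have hia : i = a + s := by omega
      have hit : i + 1 + t = a + (k' + 1) := by omega
      -- IH on the left part
      have IH1 := ih s (by omega) a u (fun i' j' h1 h2 h3 h4 =>
        hu i' j' h1 (by omega) h3 (by omega))
      have IH2 := ih t (by omega) (i + 1) u (fun i' j' h1 h2 h3 h4 =>
        hu i' j' (by omega) (by omega) (by omega) (by omega))
      rw [← hia] at IH1
      rw [hit] at IH2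
      -- split the sum
      have hsplit1 : ∑ j ∈ Finset.Ico a (a + (k' + 1)), dist (u j) (u (j + 1))
          = (∑ j ∈ Finset.Ico a i, dist (u j) (u (j + 1)))
            + ∑ j ∈ Finset.Ico i (a + (k' + 1)), dist (u j) (u (j + 1)) :=
        (Finset.sum_Ico_consecutive _ (by omega) (by omega)).symm
      have hsplit2 : ∑ j ∈ Finset.Ico i (a + (k' + 1)), dist (u j) (u (j + 1))
          = dist (u i) (u (i + 1))
            + ∑ j ∈ Finset.Ico (i + 1) (a + (k' + 1)), dist (u j) (u (j + 1)) :=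
        Finset.sum_eq_sum_Ico_succ_bot (by omega) _
      rw [hsplit1, hsplit2]
      have hana := analytic_ineq ((s:ℝ) + 1) ((t:ℝ) + 1)
        (by simp) (by simp)
      have hsum : ((s:ℝ) + 1) + ((t:ℝ) + 1) = (k':ℝ) + 1 + 1 := by
        push_cast; rw [← hst]; push_cast; ring
      rw [hsum] at hana
      push_cast
      push_cast at IH1 IH2
      linarith


lemma pathLength_cons_cons {X : Type*} [MetricSpace X] (x y : X) (t : List X) :
    pathLength (x :: y :: t) = dist x y + pathLength (y :: t) := by
  simp [pathLength]

lemma pathLength_eq_sum {X : Type*} [MetricSpace X] (d : X) (p : List X) :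
    pathLength p
      = ∑ i ∈ Finset.range (p.length - 1), dist (p.getD i d) (p.getD (i + 1) d) := by
  induction p with
  | nil => simp [pathLength]
  | cons x p ih =>
    cases p with
    | nil => simp [pathLength]
    | cons y t =>
      rw [pathLength_cons_cons, ih]
      have hl : (x :: y :: t).length - 1 = ((y :: t).length - 1) + 1 := by simp
      rw [hl, Finset.sum_range_succ']
      simp [List.getD_cons_succ, List.getD_cons_zero]
      ring


lemma dist_fin (n : ℕ) (a b : Fin n) : dist a b = |((a : ℕ) : ℝ) - ((b : ℕ) : ℝ)| := by
  rw [show dist a b = dist (((a : ℕ) : ℝ)) (((b : ℕ) : ℝ)) from rfl, Real.dist_eq]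


end Aux

/-- Proposition 10: any surjective non-contractive multi-embedding of the simple path
metric on `n ≥ 2` points into an ultrametric space has path distortion at least
`n·log₂ n / (2(n-1))`, and in particular at least `(1/2)·log₂ n`. -/
theorem path_embedding_ultrametric_lower_bound
    (n : ℕ) (hn : 2 ≤ n) (T : Type*) [MetricSpace T] (hT : IsUltrametricSpace T)
    (f : T → Fin n) (α : ℝ)
    (hsurj : Function.Surjective f)
    (hnc : ∀ u v : T, dist (f u) (f v) ≤ dist u v)
    (hpd : PathDistortionLE f α) :
    (n : ℝ) * Real.logb 2 n / (2 * ((n : ℝ) - 1)) ≤ α ∧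
    (1 / 2 : ℝ) * Real.logb 2 n ≤ α := by
  have hn0 : 0 < n := by omega
  set d0 : Fin n := ⟨0, hn0⟩ with hd0
  obtain ⟨t0, ht0⟩ := hsurj d0
  obtain ⟨p', hmap, hlen⟩ := hpd (List.finRange n)
  have hplen : p'.length = n := by
    have := congrArg List.length hmap
    simpa using this
  -- path length of finRange n is n - 1
  have hPL : pathLength (List.finRange n) = (n : ℝ) - 1 := by
    rw [pathLength_eq_sum d0]
    have hl : (List.finRange n).length - 1 = n - 1 := by simp
    rw [hl]
    rw [Finset.sum_congr rfl (fun i hi => ?_), Finset.sum_const, nsmul_eq_mul, mul_one]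
    · rw [Finset.card_range]
      have h1 : (1:ℕ) ≤ n := by omega
      push_cast [h1]; ring
    · rw [Finset.mem_range] at hi
      have hi1 : i < n := by omega
      have hi2 : i + 1 < n := by omega
      rw [List.getD_eq_getElem _ _ (by simpa using hi1),
        List.getD_eq_getElem _ _ (by simpa using hi2)]
      simp only [List.getElem_finRange]
      rw [dist_fin]
      simp only [Fin.coe_cast]
      push_cast
      rw [abs_sub_comm, abs_of_nonneg (by linarith)]
      ring
  -- the lifted path
  set u : ℕ → T := fun i => p'.getD i t0 with hu
  have hfu : ∀ i : ℕ, i < n → ((f (u i) : ℕ) : ℝ) = (i : ℝ) := by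
    intro i hi
    have hi' : i < p'.length := by omega
    have : f (u i) = (List.finRange n)[i]'(by simpa using hi) := by
      rw [hu]
      simp only
      rw [List.getD_eq_getElem _ _ hi',
        ← List.getElem_map (f := f) (h := by simpa using hi')]
      exact List.getElem_of_eq hmap _
    rw [this]
    simp [List.getElem_finRange]
  have hdist : ∀ i j : ℕ, 0 ≤ i → i ≤ 0 + (n - 1) → 0 ≤ j → j ≤ 0 + (n - 1) →
      |(i:ℝ) - (j:ℝ)| ≤ dist (u i) (u j) := by
    intro i j _ hi _ hj
    have hi' : i < n := by omega
    have hj' : j < n := by omega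
    calc |(i:ℝ) - (j:ℝ)| = dist (f (u i)) (f (u j)) := by
          rw [dist_fin, hfu i hi', hfu j hj']
      _ ≤ dist (u i) (u j) := hnc _ _
  have hkey := key_rec hT (n - 1) 0 u hdist
  have hsum : ∑ i ∈ Finset.Ico 0 (0 + (n - 1)), dist (u i) (u (i + 1)) = pathLength p' := by
    rw [pathLength_eq_sum t0, hplen]
    rw [Finset.range_eq_Ico, Nat.zero_add]
  rw [hsum] at hkey
  have hcast : ((n - 1 : ℕ) : ℝ) + 1 = (n : ℝ) := by
    have : (1:ℕ) ≤ n := by omega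
    push_cast [this]; ring
  rw [hcast] at hkey
  rw [hPL] at hlen
  -- now: (n/2) * logb 2 n ≤ pathLength p' ≤ α * (n-1)
  have hmain : (n : ℝ) / 2 * Real.logb 2 n ≤ α * ((n : ℝ) - 1) := by linarith
  have hn1 : (0:ℝ) < (n : ℝ) - 1 := by
    have : (2:ℝ) ≤ (n:ℝ) := by exact_mod_cast hn
    linarith
  have hlog : 0 ≤ Real.logb 2 n := Real.logb_nonneg one_lt_two (by exact_mod_cast hn.trans' (by norm_num))
  constructor
  · rw [div_le_iff₀ (by linarith)]
    linarith
  · have h1 : (n : ℝ) * Real.logb 2 n / (2 * ((n : ℝ) - 1)) ≤ α := by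
      rw [div_le_iff₀ (by linarith)]
      linarith
    refine le_trans ?_ h1
    rw [le_div_iff₀ (by linarith)]
    nlinarith
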